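/- The EBBE formula φ1 := ◇∀x[ ∃y□□P(x,y) ∧ □□¬P(x,x) ∧ ◇∀y( (◇P(x,y)↔□P(x,y)) ∧ ◇∀z((P(x,y)∧P(y,z))→P(x,z)) ) ] is satisfiable in an increasing domain model with infinite domain D; moreover, for every increasing domain model M and world w, if M,w ⊨ φ1 then there exists an R-successor u of w such that the local domain δ(u) is infinite. In particular, the EBBE fragment lacks the finite model property over increasing domain models. -/
import Mathlib


set_option maxHeartbeats 1000000

/-! ## Syntax of first-order modal logic (FOML)

Predicate symbols and variables are represented by natural numbers; an atom
`atom p args` applies the predicate symbol `p` to the list of variables `args`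
(the arity of `p` in this occurrence is the length of `args`). -/
inductive Formula : Type where
  | atom (p : ℕ) (args : List ℕ)
  | neg  (φ : Formula)
  | and  (φ ψ : Formula)
  | or   (φ ψ : Formula)
  | box  (φ : Formula)
  | dia  (φ : Formula)
  | ex   (x : ℕ) (φ : Formula)
  | all  (x : ℕ) (φ : Formula)
deriving DecidableEq

namespace Formula

def imp (φ ψ : Formula) : Formula := .or φ.neg ψ
def biimp (φ ψ : Formula) : Formula := .and (imp φ ψ) (imp ψ φ)
/-- a fixed tautology `⊤` -/
def top : Formula := .or (.atom 0 []) (.neg (.atom 0 []))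
/-- a fixed contradiction `⊥` -/
def bot : Formula := .and (.atom 0 []) (.neg (.atom 0 []))

end Formula

def bigAnd (l : List Formula) : Formula := l.foldr Formula.and Formula.top
def bigOr  (l : List Formula) : Formula := l.foldr Formula.or Formula.bot

/-! ## Semantics: Kripke structures with world-relative domains -/

structure Model where
  W : Type
  D : Type
  R : W → W → Prop
  dom : W → Set D
  ρ : W → ℕ → Set (List D)

/-- `M` is an increasing domain model: nonempty countable set of worlds, nonempty
countable domain, nonempty local domains that increase along the accessibility
relation, and interpretations of predicates at a world take values in the local
domain of that world. -/
def Model.Increasing (M : Model) : Prop :=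
  Nonempty M.W ∧ Nonempty M.D ∧ Countable M.W ∧ Countable M.D ∧
    (∀ w, (M.dom w).Nonempty) ∧
    (∀ w v, M.R w v → M.dom w ⊆ M.dom v) ∧
    (∀ w p l, l ∈ M.ρ w p → ∀ d ∈ l, d ∈ M.dom w)

def Model.sat (M : Model) : M.W → (ℕ → M.D) → Formula → Prop
  | w, σ, .atom p args => args.map σ ∈ M.ρ w p
  | w, σ, .neg φ => ¬ M.sat w σ φ
  | w, σ, .and φ ψ => M.sat w σ φ ∧ M.sat w σ ψ
  | w, σ, .or φ ψ => M.sat w σ φ ∨ M.sat w σ ψ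
  | w, σ, .box φ => ∀ v, M.R w v → M.sat v σ φ
  | w, σ, .dia φ => ∃ v, M.R w v ∧ M.sat v σ φ
  | w, σ, .ex x φ => ∃ d ∈ M.dom w, M.sat w (Function.update σ x d) φ
  | w, σ, .all x φ => ∀ d ∈ M.dom w, M.sat w (Function.update σ x d) φ

/-- the assignment `σ` is relevant at the world `w` -/
def Model.relevant (M : Model) (w : M.W) (σ : ℕ → M.D) : Prop := ∀ x, σ x ∈ M.dom w

/-- satisfiability over increasing domain models -/
def Satisfiable (φ : Formula) : Prop :=
  ∃ (M : Model), M.Increasing ∧ ∃ (w : M.W) (σ : ℕ → M.D), M.relevant w σ ∧ M.sat w σ φ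

/-- The `EBBE` fragment: atomic formulas, negation, conjunction (and
disjunction), `□α`, `◇α`, and the bundles `∃x□α` and `□∃xα` together with
their duals `∀x◇α` and `◇∀xα`. -/
inductive EBBE : Formula → Prop where
  | atom (p : ℕ) (args : List ℕ) : EBBE (.atom p args)
  | neg {φ : Formula} : EBBE φ → EBBE (.neg φ)
  | and {φ ψ : Formula} : EBBE φ → EBBE ψ → EBBE (.and φ ψ)
  | or {φ ψ : Formula} : EBBE φ → EBBE ψ → EBBE (.or φ ψ)
  | box {φ : Formula} : EBBE φ → EBBE (.box φ)
  | dia {φ : Formula} : EBBE φ → EBBE (.dia φ)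
  | exBox {x : ℕ} {φ : Formula} : EBBE φ → EBBE (.ex x (.box φ))
  | allDia {x : ℕ} {φ : Formula} : EBBE φ → EBBE (.all x (.dia φ))
  | boxEx {x : ℕ} {φ : Formula} : EBBE φ → EBBE (.box (.ex x φ))
  | diaAll {x : ℕ} {φ : Formula} : EBBE φ → EBBE (.dia (.all x φ))

/-- the binary predicate `P` -/
def atomP (x y : ℕ) : Formula := .atom 0 [x, y]

/-- `φ1 := ◇∀x[ ∃y□□P(x,y) ∧ □□¬P(x,x) ∧
◇∀y( (◇P(x,y) ↔ □P(x,y)) ∧ ◇∀z((P(x,y) ∧ P(y,z)) → P(x,z)) ) ]`,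
with variables `x := 0`, `y := 1`, `z := 2`. -/
def phi1 : Formula :=
  .dia (.all 0 (.and
    (.ex 1 (.box (.box (atomP 0 1))))
    (.and
      (.box (.box (.neg (atomP 0 0))))
      (.dia (.all 1 (.and
        (Formula.biimp (.dia (atomP 0 1)) (.box (atomP 0 1)))
        (.dia (.all 2 (Formula.imp (.and (atomP 0 1) (atomP 1 2)) (atomP 0 2))))))))))

/-- The `EBBE` formula `φ1` is satisfiable in an increasing
domain model with infinite domain; moreover, in every increasing domain model,
at every world satisfying `φ1` there is a successor whose local domain is
infinite.  In particular the `EBBE` fragment lacks the finite model property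
over increasing domain models. -/
theorem ebbe_no_fmp :
    EBBE phi1 ∧
      (∃ M : Model, M.Increasing ∧ Infinite M.D ∧
        ∃ (w : M.W) (σ : ℕ → M.D), M.relevant w σ ∧ M.sat w σ phi1) ∧
      (∀ M : Model, M.Increasing →
        ∀ (w : M.W) (σ : ℕ → M.D), M.relevant w σ → M.sat w σ phi1 →
          ∃ u, M.R w u ∧ (M.dom u).Infinite) := by
  refine ⟨?_, ?_, ?_⟩
  · -- EBBE
    unfold phi1 atomP Formula.biimp Formula.imp
    apply EBBE.diaAll
    apply EBBE.and
    · exact EBBE.exBox (EBBE.box (EBBE.atom _ _))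
    apply EBBE.and
    · exact EBBE.box (EBBE.box (EBBE.neg (EBBE.atom _ _)))
    apply EBBE.diaAll
    apply EBBE.and
    · exact EBBE.and (EBBE.or (EBBE.neg (EBBE.dia (EBBE.atom _ _))) (EBBE.box (EBBE.atom _ _)))
        (EBBE.or (EBBE.neg (EBBE.box (EBBE.atom _ _))) (EBBE.dia (EBBE.atom _ _)))
    apply EBBE.diaAll
    exact EBBE.or (EBBE.neg (EBBE.and (EBBE.atom _ _) (EBBE.atom _ _))) (EBBE.atom _ _)
  · refine ⟨⟨Unit, ℕ, fun _ _ => True, fun _ => Set.univ,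
      fun _ _ => {l | ∃ m n : ℕ, m < n ∧ l = [m, n]}⟩,
      ⟨⟨()⟩, ⟨0⟩, inferInstance, inferInstance, fun _ => ⟨0, trivial⟩,
        fun _ _ _ => le_refl _, fun _ _ _ _ _ _ => trivial⟩,
      inferInstance, (), fun _ => 0, fun _ => trivial, ?_⟩
    simp [Model.sat, phi1, atomP, Formula.biimp, Formula.imp, Function.update_apply]
    exact fun d => ⟨⟨d + 1, by omega⟩, fun e => ⟨by omega, fun f => by omega⟩⟩
  · intro M hM w σ hrel hsat
    simp only [Model.sat, phi1, atomP, Formula.biimp, Formula.imp, List.map,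
      Function.update_apply] at hsat
    norm_num at hsat
    obtain ⟨u, hwu, hu⟩ := hsat
    refine ⟨u, hwu, ?_⟩
    obtain ⟨-, -, -, -, hne, hinc, -⟩ := hM
    have hstep : ∀ d ∈ M.dom u, ∃ e, e ∈ M.dom u ∧
        ∀ v, M.R u v → ∀ v', M.R v v' → [d, e] ∈ M.ρ v' 0 := by
      intro d hd
      obtain ⟨e, he, h⟩ := (hu d hd).1
      exact ⟨e, he, h⟩
    choose! g hg1 hg2 using hstep
    obtain ⟨d0, hd0⟩ := hne u
    set f : ℕ → M.D := fun n => g^[n] d0 with hf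
    have hfsucc : ∀ n, f (n + 1) = g (f n) := fun n => Function.iterate_succ_apply' g n d0
    have hfmem : ∀ n, f n ∈ M.dom u := by
      intro n
      induction n with
      | zero => exact hd0
      | succ n ih => rw [hfsucc]; exact hg1 _ ih
    have hfP : ∀ n v, M.R u v → ∀ v', M.R v v' → [f n, f (n + 1)] ∈ M.ρ v' 0 := by
      intro n; rw [hfsucc]; exact hg2 _ (hfmem n)
    have key : ∀ i j, i < j → f i ≠ f j := by
      intro i j hij hEq
      have hBi := (hu (f i) (hfmem i)).2.1
      obtain ⟨v, huv, hv⟩ := (hu (f i) (hfmem i)).2.2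
      set Q : M.D → Prop := fun e => ∀ v', M.R v v' → [f i, e] ∈ M.ρ v' 0 with hQ
      have htrans : ∀ e e', e ∈ M.dom u → e' ∈ M.dom u → Q e →
          (∀ v', M.R v v' → [e, e'] ∈ M.ρ v' 0) → Q e' := by
        intro e e' he he' hQe hee'
        obtain ⟨-, v'', hvv'', htr⟩ := hv e (hinc u v huv he)
        have hPf' : [f i, e'] ∈ M.ρ v'' 0 := by
          have h1 : [f i, e] ∈ M.ρ v'' 0 := hQe v'' hvv''
          have h2 : [e, e'] ∈ M.ρ v'' 0 := hee' v'' hvv''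
          have hf'' : e' ∈ M.dom v'' := hinc v v'' hvv'' (hinc u v huv he')
          rcases htr e' hf'' with h | h
          · exact absurd h2 (h h1)
          · exact h
        obtain ⟨⟨hall | hbox, -⟩, -⟩ := hv e' (hinc u v huv he')
        · exact absurd hPf' (hall v'' hvv'')
        · exact hbox
      have chain : ∀ j, i < j → Q (f j) := by
        intro j hj
        induction j with
        | zero => omega
        | succ n ih =>
          rcases Nat.lt_or_ge i n with h | h
          · exact htrans (f n) (f (n + 1)) (hfmem n) (hfmem (n + 1)) (ih h)
              (fun v' hv' => hfP n v huv v' hv')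
          · have : i = n := by omega
            subst this
            exact fun v' hv' => hfP i v huv v' hv'
      have hQfi : Q (f i) := hEq ▸ chain j hij
      obtain ⟨-, v'', hvv'', -⟩ := hv (f i) (hinc u v huv (hfmem i))
      exact hBi v huv v'' hvv'' (hQfi v'' hvv'')
    have hinj : Function.Injective f := by
      intro i j h
      rcases lt_trichotomy i j with hlt | heq | hgt
      · exact absurd h (key i j hlt)
      · exact heq
      · exact absurd h.symm (key j i hgt)
    exact Set.infinite_of_injective_forall_mem hinj hfmem
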